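/- arXiv:2109.09288 — 2 statements merged into one kernel-verified Lean document; each statement's English description precedes it below -/
import Mathlib

section
/- For every integer k ≥ 1 there exist a finite index set S ⊂ ℤ × ℕ with 2j − i = k for every (i,j) ∈ S, and real constants (a_{i,j})_{(i,j)∈S}, such that for all t > 0 and s > 0 the k-th partial derivative in t of g satisfies ∂^k g/∂t^k (t,s) = ( Σ_{(i,j)∈S} a_{i,j} t^{i} s^{−j} ) · g(t,s). -/
open MeasureTheory Set Filter
open scoped ENNReal NNReal

noncomputable section

/-- The density `g(t,s) = (t/(2√π)) e^{−t²/(4s)} s^{−3/2}` of the one-sided stable measure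
of order 1/2. -/
def gStable (t s : ℝ) : ℝ :=
  t / (2 * Real.sqrt Real.pi) * Real.exp (-(t ^ 2) / (4 * s)) * s ^ (-(3 : ℝ) / 2)

/-- The one-sided stable measure `μ_t^{(1/2)}` of order 1/2 on (0,∞). -/
def muStable (t : ℝ) : Measure ℝ :=
  (volume.withDensity fun s => ENNReal.ofReal (gStable t s)).restrict (Set.Ioi 0)

/-- The measure `dt/t` on (0,∞). -/
def muHaar : Measure ℝ :=
  (volume.withDensity fun t => ENNReal.ofReal t⁻¹).restrict (Set.Ioi 0)

/-- The Luxemburg norm with variable exponent `p(·)`, for `ℝ≥0∞`-valued functions. -/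
def luxNormE {X : Type*} [MeasurableSpace X] (ν : Measure X) (p : X → ℝ) (f : X → ℝ≥0∞) :
    ℝ≥0∞ :=
  sInf {l : ℝ≥0∞ | ∃ c : ℝ, 0 < c ∧ l = ENNReal.ofReal c ∧
    ∫⁻ x, (f x / ENNReal.ofReal c) ^ p x ∂ν ≤ 1}

/-- The Luxemburg norm with variable exponent `p(·)` of a real valued function. -/
def luxNorm {X : Type*} [MeasurableSpace X] (ν : Measure X) (p : X → ℝ) (f : X → ℝ) : ℝ≥0∞ :=
  luxNormE ν p fun x => ENNReal.ofReal |f x|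

/-- The Gaussian measure `γ_d` on ℝ^d. -/
def gaussMeasure (d : ℕ) : Measure (EuclideanSpace ℝ (Fin d)) :=
  volume.withDensity fun x => ENNReal.ofReal (Real.pi ^ (-(d : ℝ) / 2) * Real.exp (-‖x‖ ^ 2))

/-- The Ornstein-Uhlenbeck semigroup `T_t`. -/
def OU (d : ℕ) (t : ℝ) (f : EuclideanSpace ℝ (Fin d) → ℝ) (x : EuclideanSpace ℝ (Fin d)) : ℝ :=
  (1 - Real.exp (-2 * t)) ^ (-(d : ℝ) / 2) *
    ∫ y, Real.exp (-(Real.exp (-2 * t) * (‖x‖ ^ 2 + ‖y‖ ^ 2) -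
      2 * Real.exp (-t) * (inner ℝ x y : ℝ)) / (1 - Real.exp (-2 * t))) * f y ∂(gaussMeasure d)

/-- The maximal function `T*` of the Ornstein-Uhlenbeck semigroup. -/
def OUstar (d : ℕ) (f : EuclideanSpace ℝ (Fin d) → ℝ) (x : EuclideanSpace ℝ (Fin d)) : ℝ≥0∞ :=
  ⨆ t ∈ Set.Ioi (0 : ℝ), ENNReal.ofReal |OU d t f x|

/-- The Poisson-Hermite semigroup `P_t f(x) = ∫₀^∞ T_s f(x) μ_t^{(1/2)}(ds)`. -/
def PH (d : ℕ) (t : ℝ) (f : EuclideanSpace ℝ (Fin d) → ℝ) (x : EuclideanSpace ℝ (Fin d)) : ℝ :=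
  ∫ s in Set.Ioi (0 : ℝ), OU d s f x * gStable t s

/-- The k-th derivative in `t` of the Poisson-Hermite semigroup, `∂^k_t P_t f (x)`. -/
def dPH (d : ℕ) (k : ℕ) (f : EuclideanSpace ℝ (Fin d) → ℝ) (t : ℝ)
    (x : EuclideanSpace ℝ (Fin d)) : ℝ :=
  iteratedDeriv k (fun u => PH d u f x) t

/-- The class `𝒫^∞_{γ_d}(ℝ^d)` of Dalmasso-Scotto. -/
def memPGammaInf (d : ℕ) (p : EuclideanSpace ℝ (Fin d) → ℝ) : Prop :=
  ∃ C pinf : ℝ, 0 < C ∧ 1 ≤ pinf ∧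
    ∀ x : EuclideanSpace ℝ (Fin d), x ≠ 0 → |p x - pinf| ≤ C / ‖x‖ ^ 2

/-- The local log-Hölder class `LH₀(ℝ^d)`. -/
def memLH0 (d : ℕ) (p : EuclideanSpace ℝ (Fin d) → ℝ) : Prop :=
  ∃ C : ℝ, 0 < C ∧ ∀ x y : EuclideanSpace ℝ (Fin d), x ≠ y →
    |p x - p y| ≤ C / Real.log (Real.exp 1 + 1 / ‖x - y‖)

/-- A measurable exponent `p : ℝ^d → [1,∞)` with `1 < p₋ ≤ p₊ < ∞` (essential bounds w.r.t.
the Gaussian measure). -/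
def expOKGauss (d : ℕ) (p : EuclideanSpace ℝ (Fin d) → ℝ) : Prop :=
  Measurable p ∧ (∀ x, 1 ≤ p x) ∧
    ∃ m M : ℝ, 1 < m ∧ (∀ᵐ x ∂(gaussMeasure d), m ≤ p x) ∧ ∀ᵐ x ∂(gaussMeasure d), p x ≤ M

/-- `p(·) ∈ 𝒫^∞_{γ_d}(ℝ^d) ∩ LH₀(ℝ^d)` with `1 < p₋ ≤ p₊ < ∞`. -/
def goodP (d : ℕ) (p : EuclideanSpace ℝ (Fin d) → ℝ) : Prop :=
  memPGammaInf d p ∧ memLH0 d p ∧ expOKGauss d p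

/-- A measurable exponent `q : (0,∞) → [1,∞)` with `1 < q₋ ≤ q₊ < ∞` (essential bounds w.r.t.
the measure `dt/t`). -/
def expOKmu (q : ℝ → ℝ) : Prop :=
  Measurable q ∧ (∀ t : ℝ, 0 < t → 1 ≤ q t) ∧
    ∃ m M : ℝ, 1 < m ∧ (∀ᵐ t ∂muHaar, m ≤ q t) ∧ ∀ᵐ t ∂muHaar, q t ≤ M

/-- The class `𝒫_{0,∞}` of exponents on `(0,∞)`. -/
def memP0Inf (q : ℝ → ℝ) : Prop :=
  Measurable q ∧ (∀ t : ℝ, 0 < t → 1 ≤ q t) ∧ (∃ M : ℝ, ∀ᵐ t ∂muHaar, q t ≤ M) ∧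
    ∃ q0 qinf A : ℝ, 0 < A ∧
      Filter.Tendsto q (nhdsWithin 0 (Set.Ioi 0)) (nhds q0) ∧
      Filter.Tendsto q Filter.atTop (nhds qinf) ∧
      (∀ t : ℝ, 0 < t → t ≤ 1 / 2 → |q t - q0| ≤ A / Real.log (1 / t)) ∧
      (∀ t : ℝ, 2 < t → |q t - qinf| ≤ A / Real.log t)

/-- The Besov-Lipschitz seminorm `‖ t ↦ t^{k−α} ‖∂^k_t P_t f‖_{p(·),γ_d} ‖_{q(·),μ}`. -/
def besovSemi (d : ℕ) (p : EuclideanSpace ℝ (Fin d) → ℝ) (q : ℝ → ℝ) (α : ℝ) (k : ℕ)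
    (f : EuclideanSpace ℝ (Fin d) → ℝ) : ℝ≥0∞ :=
  luxNormE muHaar q fun t =>
    ENNReal.ofReal (t ^ ((k : ℝ) - α)) * luxNorm (gaussMeasure d) p (dPH d k f t)

/-- The Triebel-Lizorkin seminorm `‖ x ↦ ‖ t ↦ t^{k−α} |∂^k_t P_t f(x)| ‖_{q(·),μ} ‖_{p(·),γ_d}`. -/
def triebelSemi (d : ℕ) (p : EuclideanSpace ℝ (Fin d) → ℝ) (q : ℝ → ℝ) (α : ℝ) (k : ℕ)
    (f : EuclideanSpace ℝ (Fin d) → ℝ) : ℝ≥0∞ :=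
  luxNormE (gaussMeasure d) p fun x =>
    luxNorm muHaar q fun t => t ^ ((k : ℝ) - α) * dPH d k f t x

/-- The least constant `A_n(f)` with `‖∂^n_t P_t f‖_{p(·),γ_d} ≤ A t^{α−n}` for all `t > 0`. -/
def besovConst (d : ℕ) (p : EuclideanSpace ℝ (Fin d) → ℝ) (α : ℝ) (n : ℕ)
    (f : EuclideanSpace ℝ (Fin d) → ℝ) : ℝ≥0∞ :=
  sInf {A : ℝ≥0∞ | ∀ t : ℝ, 0 < t →
    luxNorm (gaussMeasure d) p (dPH d n f t) ≤ A * ENNReal.ofReal (t ^ (α - (n : ℝ)))}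
lemma gStable_hasDerivAt {t s : ℝ} (ht : 0 < t) (hs : 0 < s) :
    HasDerivAt (fun u => gStable u s) ((t⁻¹ - t / (2 * s)) * gStable t s) t := by
  have hP : Real.sqrt Real.pi ≠ 0 := by positivity
  have h1 : HasDerivAt (fun u : ℝ => u / (2 * Real.sqrt Real.pi))
      (1 / (2 * Real.sqrt Real.pi)) t := by
    simpa using (hasDerivAt_id t).div_const (2 * Real.sqrt Real.pi)
  have h2 : HasDerivAt (fun u : ℝ => Real.exp (-(u ^ 2) / (4 * s)))
      (Real.exp (-(t ^ 2) / (4 * s)) * (-(2 * t) / (4 * s))) t := by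
    have hpow : HasDerivAt (fun u : ℝ => -(u ^ 2) / (4 * s)) (-(2 * t) / (4 * s)) t := by
      have := ((hasDerivAt_pow 2 t).neg).div_const (4 * s)
      simpa using this
    simpa using hpow.exp
  have h := ((h1.fun_mul h2).mul_const (s ^ (-(3 : ℝ) / 2)))
  refine h.congr_deriv ?_
  unfold gStable
  field_simp
  ring

lemma key (k : ℕ) : ∃ c : ℕ → ℝ, (∀ j, k < j → c j = 0) ∧ ∀ t s : ℝ, 0 < t → 0 < s →
    iteratedDeriv k (fun u => gStable u s) t =
      (∑ j ∈ Finset.range (k + 1),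
        c j * t ^ (2 * (j : ℤ) - (k : ℤ)) * s ^ (-(j : ℤ))) * gStable t s := by
  induction k with
  | zero =>
    refine ⟨fun j => if j = 0 then 1 else 0, ?_, ?_⟩
    · intro j hj; exact if_neg (by omega)
    · intro t s ht hs; simp
  | succ k ih =>
    obtain ⟨c, hc0, hc⟩ := ih
    refine ⟨fun j => (2 * (j : ℝ) - k + 1) * c j - (if j = 0 then 0 else c (j - 1) / 2),
      ?_, ?_⟩
    · intro j hj
      have h1 : c j = 0 := hc0 j (by omega)
      have h2 : c (j - 1) = 0 := hc0 (j - 1) (by omega)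
      simp [h1, h2]
    · intro t s ht hs
      rw [iteratedDeriv_succ]
      have heq : (fun u => iteratedDeriv k (fun v => gStable v s) u) =ᶠ[nhds t]
          fun u => (∑ j ∈ Finset.range (k + 1),
            c j * u ^ (2 * (j : ℤ) - (k : ℤ)) * s ^ (-(j : ℤ))) * gStable u s := by
        filter_upwards [Ioi_mem_nhds ht] with u hu
        exact hc u s hu hs
      rw [heq.deriv_eq]
      have hf : HasDerivAt (fun u => ∑ j ∈ Finset.range (k + 1),
            c j * u ^ (2 * (j : ℤ) - (k : ℤ)) * s ^ (-(j : ℤ)))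
          (∑ j ∈ Finset.range (k + 1),
            c j * ((Int.cast (2 * (j : ℤ) - (k : ℤ)) : ℝ) * t ^ (2 * (j : ℤ) - (k : ℤ) - 1)) *
              s ^ (-(j : ℤ))) t :=
        HasDerivAt.fun_sum fun j _ =>
          ((hasDerivAt_zpow (2 * (j : ℤ) - (k : ℤ)) t (Or.inl ht.ne')).const_mul
            (c j)).mul_const _
      rw [(hf.fun_mul (gStable_hasDerivAt ht hs)).deriv]
      have coeff : (∑ j ∈ Finset.range (k + 1),
            c j * ((Int.cast (2 * (j : ℤ) - (k : ℤ)) : ℝ) * t ^ (2 * (j : ℤ) - (k : ℤ) - 1)) *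
              s ^ (-(j : ℤ)))
          + (∑ j ∈ Finset.range (k + 1),
              c j * t ^ (2 * (j : ℤ) - (k : ℤ)) * s ^ (-(j : ℤ))) * (t⁻¹ - t / (2 * s))
          = ∑ j ∈ Finset.range (k + 1 + 1),
              ((2 * (j : ℝ) - k + 1) * c j - (if j = 0 then 0 else c (j - 1) / 2)) *
                t ^ (2 * (j : ℤ) - ((k : ℤ) + 1)) * s ^ (-(j : ℤ)) := by
        have expand : ∀ j ∈ Finset.range (k + 1 + 1),
            ((2 * (j : ℝ) - k + 1) * c j - (if j = 0 then 0 else c (j - 1) / 2)) *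
                t ^ (2 * (j : ℤ) - ((k : ℤ) + 1)) * s ^ (-(j : ℤ))
            = (2 * (j : ℝ) - k + 1) * c j * t ^ (2 * (j : ℤ) - ((k : ℤ) + 1)) * s ^ (-(j : ℤ))
              - (if j = 0 then 0 else c (j - 1) / 2) *
                t ^ (2 * (j : ℤ) - ((k : ℤ) + 1)) * s ^ (-(j : ℤ)) := by
          intro j _; ring
        rw [Finset.sum_congr rfl expand, Finset.sum_sub_distrib]
        rw [Finset.sum_range_succ (fun j => (2 * (j : ℝ) - k + 1) * c j *
          t ^ (2 * (j : ℤ) - ((k : ℤ) + 1)) * s ^ (-(j : ℤ)))]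
        rw [hc0 (k + 1) (lt_add_one k)]
        rw [Finset.sum_range_succ' (fun j => (if j = 0 then 0 else c (j - 1) / 2) *
          t ^ (2 * (j : ℤ) - ((k : ℤ) + 1)) * s ^ (-(j : ℤ)))]
        simp only [Nat.succ_ne_zero, if_neg, if_pos, reduceIte, Nat.add_sub_cancel,
          zero_mul, mul_zero, add_zero]
        rw [Finset.sum_mul, ← Finset.sum_sub_distrib, ← Finset.sum_add_distrib]
        refine Finset.sum_congr rfl fun j hj => ?_
        have e1 : t ^ (2 * (j : ℤ) - (k : ℤ)) = t ^ (2 * (j : ℤ) - (k : ℤ) - 1) * t := by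
          rw [← zpow_add_one₀ ht.ne']; ring_nf
        have e2 : t ^ (2 * ((j : ℤ) + 1) - ((k : ℤ) + 1))
            = t ^ (2 * (j : ℤ) - (k : ℤ) - 1) * (t * t) := by
          rw [show (2 : ℤ) * ((j : ℤ) + 1) - ((k : ℤ) + 1)
            = (2 * (j : ℤ) - (k : ℤ) - 1) + 1 + 1 by ring, zpow_add₀ ht.ne',
            zpow_add₀ ht.ne', zpow_one]
          ring
        have e3 : s ^ (-((j : ℤ) + 1)) = s ^ (-(j : ℤ)) * s⁻¹ := by
          rw [show -((j : ℤ) + 1) = -(j : ℤ) + (-1) by ring, zpow_add₀ hs.ne']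
          simp
        have e4 : t ^ (2 * (j : ℤ) - ((k : ℤ) + 1)) = t ^ (2 * (j : ℤ) - (k : ℤ) - 1) := by
          ring_nf
        push_cast
        rw [e1, e2, e3, e4]
        field_simp
        ring
      push_cast at coeff ⊢
      rw [← coeff]
      ring

/-- For every `k ≥ 1` there is a finite set `S ⊆ ℤ × ℕ` with `2j − i = k`
for all `(i,j) ∈ S`, and constants `a_{i,j}`, such that
`∂^k g/∂t^k (t,s) = (Σ_{(i,j)∈S} a_{i,j} t^i s^{−j}) g(t,s)` for all `t, s > 0`. -/
theorem stmt_0 (k : ℕ) (hk : 1 ≤ k) :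
    ∃ (S : Finset (ℤ × ℕ)) (a : ℤ × ℕ → ℝ),
      (∀ ij ∈ S, 2 * (ij.2 : ℤ) - ij.1 = (k : ℤ)) ∧
      ∀ t s : ℝ, 0 < t → 0 < s →
        iteratedDeriv k (fun u => gStable u s) t =
          (∑ ij ∈ S, a ij * t ^ ij.1 * s ^ (-(ij.2 : ℤ))) * gStable t s := by
  obtain ⟨c, -, hc⟩ := key k
  refine ⟨(Finset.range (k + 1)).image (fun j : ℕ => ((2 * (j : ℤ) - (k : ℤ), j) : ℤ × ℕ)),
    fun ij => c ij.2, ?_, ?_⟩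
  · intro ij hij
    simp only [Finset.mem_image] at hij
    obtain ⟨j, -, rfl⟩ := hij
    ring
  · intro t s ht hs
    rw [hc t s ht hs]
    congr 1
    rw [Finset.sum_image (fun j _ j' _ h => (Prod.ext_iff.mp h).2)]
end
end

section
/- For every integer k ≥ 1 there exists a constant C_k > 0 such that for every f ∈ L¹(γ_d), every x ∈ ℝ^d and every t > 0, |∂^k/∂t^k P_t f(x)| ≤ C_k · T* f(x) · t^{−k}. -/
open MeasureTheory Set Filter
open scoped ENNReal NNReal

noncomputable section

namespace S3

def trm (a m : ℕ) (t s : ℝ) : ℝ :=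
  t ^ a * s ^ (-(3:ℝ)/2 - m) * Real.exp (-(t^2) / (4*s))

lemma trm_nonneg {a m : ℕ} {t s : ℝ} (ht : 0 ≤ t) (hs : 0 < s) : 0 ≤ trm a m t s := by
  unfold trm
  have := Real.rpow_nonneg hs.le (-(3:ℝ)/2 - m)
  positivity

lemma hasDerivAt_trm (a m : ℕ) {s : ℝ} (hs : 0 < s) (t : ℝ) :
    HasDerivAt (fun t => trm a m t s)
      ((a:ℝ) * trm (a-1) m t s - (1/2) * trm (a+1) (m+1) t s) t := by
  have h1 : HasDerivAt (fun t : ℝ => t ^ a * s ^ (-(3:ℝ)/2 - m))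
      ((a:ℝ) * t ^ (a-1) * s ^ (-(3:ℝ)/2 - m)) t := (hasDerivAt_pow a t).mul_const _
  have h2 : HasDerivAt (fun t : ℝ => Real.exp (-(t^2) / (4*s)))
      (Real.exp (-(t^2) / (4*s)) * (-((2:ℕ) * t ^ 1) / (4*s))) t :=
    (((hasDerivAt_pow 2 t).neg).div_const (4*s)).exp
  have h := h1.mul h2
  refine h.congr_deriv ?_
  have hrw : s ^ (-(3:ℝ)/2 - (m+1:ℕ)) = s ^ (-(3:ℝ)/2 - m) / s := by
    rw [show (-(3:ℝ)/2 - (m+1:ℕ)) = (-(3:ℝ)/2 - m) - 1 by push_cast; ring,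
      Real.rpow_sub hs, Real.rpow_one]
  unfold trm
  rw [hrw]
  field_simp
  ring



abbrev TL := List (ℝ × ℕ × ℕ)

def ev (L : TL) (t s : ℝ) : ℝ := (L.map fun p => p.1 * trm p.2.1 p.2.2 t s).sum

def Dl (L : TL) : TL :=
  L.flatMap fun p => [((p.2.1 : ℝ) * p.1, p.2.1 - 1, p.2.2), (-p.1/2, p.2.1 + 1, p.2.2 + 1)]

@[simp] lemma ev_nil (t s : ℝ) : ev [] t s = 0 := rfl

@[simp] lemma ev_cons (p : ℝ × ℕ × ℕ) (L : TL) (t s : ℝ) :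
    ev (p :: L) t s = p.1 * trm p.2.1 p.2.2 t s + ev L t s := by
  simp [ev]

@[simp] lemma Dl_nil : Dl [] = [] := rfl

@[simp] lemma Dl_cons (p : ℝ × ℕ × ℕ) (L : TL) :
    Dl (p :: L) = ((p.2.1 : ℝ) * p.1, p.2.1 - 1, p.2.2) :: (-p.1/2, p.2.1 + 1, p.2.2 + 1)
      :: Dl L := rfl

lemma hasDerivAt_ev (L : TL) {s : ℝ} (hs : 0 < s) (t : ℝ) :
    HasDerivAt (fun t => ev L t s) (ev (Dl L) t s) t := by
  induction L with
  | nil => simpa using (hasDerivAt_const t (0:ℝ))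
  | cons p L ih =>
    have h := ((hasDerivAt_trm p.2.1 p.2.2 hs t).const_mul p.1).add ih
    simp only [ev_cons, Dl_cons]
    refine h.congr_deriv ?_
    ring


lemma meas_kernel (q t : ℝ) : Measurable (fun s : ℝ => s ^ q * Real.exp (-(t^2) / (4*s))) := by
  fun_prop

lemma integrableOn_kernel (q t : ℝ) (hq : q < -1) (ht : 0 < t) :
    IntegrableOn (fun s : ℝ => s ^ q * Real.exp (-(t^2) / (4*s))) (Ioi (0:ℝ)) := by
  have hmeas := meas_kernel q t
  have hsplit : Ioc (0:ℝ) 1 ∪ Ioi 1 = Ioi 0 := Ioc_union_Ioi_eq_Ioi zero_le_one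
  rw [← hsplit]
  apply IntegrableOn.union
  · -- bounded on (0,1]
    set n : ℕ := ⌈-q⌉₊ with hn
    have hnq : -q ≤ n := Nat.le_ceil _
    set c : ℝ := t^2/4 with hc
    have hcpos : 0 < c := by positivity
    refine Integrable.mono' (g := fun _ => (n.factorial : ℝ) / c ^ n)
      (integrableOn_const measure_Ioc_lt_top.ne) hmeas.aestronglyMeasurable ?_
    filter_upwards [ae_restrict_mem measurableSet_Ioc] with s hs
    obtain ⟨hs0, hs1⟩ := hs
    have hexp : Real.exp (-(t^2) / (4*s)) ≤ (n.factorial : ℝ) * s ^ n / c ^ n := by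
      have h1 : (c/s) ^ n / (n.factorial : ℝ) ≤ Real.exp (c/s) :=
        Real.pow_div_factorial_le_exp _ (by positivity) n
      have h2 : Real.exp (-(t^2) / (4*s)) = (Real.exp (c/s))⁻¹ := by
        rw [← Real.exp_neg]
        congr 1
        rw [hc]
        field_simp
      have h3 : (Real.exp (c/s))⁻¹ ≤ ((c/s) ^ n / (n.factorial : ℝ))⁻¹ :=
        inv_anti₀ (by positivity) h1
      have h4 : ((c/s) ^ n / (n.factorial : ℝ))⁻¹ = (n.factorial : ℝ) * s ^ n / c ^ n := by
        rw [div_pow]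
        field_simp
      rw [h2, ← h4]
      exact h3
    have hnorm : ‖s ^ q * Real.exp (-(t^2) / (4*s))‖ = s ^ q * Real.exp (-(t^2) / (4*s)) := by
      rw [Real.norm_eq_abs, abs_of_nonneg]
      have := Real.rpow_nonneg hs0.le q
      positivity
    rw [hnorm]
    calc s ^ q * Real.exp (-(t^2) / (4*s)) ≤ s ^ q * ((n.factorial : ℝ) * s ^ n / c ^ n) := by
          apply mul_le_mul_of_nonneg_left hexp (Real.rpow_nonneg hs0.le q)
      _ = ((n.factorial : ℝ) / c ^ n) * s ^ (q + n) := by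
          rw [Real.rpow_add hs0, Real.rpow_natCast]
          ring
      _ ≤ ((n.factorial : ℝ) / c ^ n) * 1 := by
          apply mul_le_mul_of_nonneg_left _ (by positivity)
          exact Real.rpow_le_one hs0.le hs1 (by linarith)
      _ = (n.factorial : ℝ) / c ^ n := mul_one _
  · -- tail
    refine Integrable.mono' (integrableOn_Ioi_rpow_of_lt hq one_pos)
      hmeas.aestronglyMeasurable ?_
    filter_upwards [ae_restrict_mem measurableSet_Ioi] with s hs
    have hs0 : (0:ℝ) < s := lt_trans one_pos hs
    have h1 : Real.exp (-(t^2) / (4*s)) ≤ 1 := by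
      rw [Real.exp_le_one_iff]
      apply div_nonpos_of_nonpos_of_nonneg <;> nlinarith
    rw [Real.norm_eq_abs, abs_of_nonneg (by positivity)]
    nlinarith [Real.rpow_nonneg hs0.le q, Real.rpow_pos_of_pos hs0 q]





lemma q_lt (m : ℕ) : (-(3:ℝ)/2 - m) < -1 := by
  have : (0:ℝ) ≤ m := Nat.cast_nonneg m
  linarith

lemma integrableOn_trm (a m : ℕ) {t : ℝ} (ht : 0 < t) :
    IntegrableOn (fun s => trm a m t s) (Ioi (0:ℝ)) := by
  have h := (integrableOn_kernel (-(3:ℝ)/2 - m) t (q_lt m) ht).const_mul (t ^ a)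
  simpa [trm, mul_assoc, IntegrableOn] using h

def Jm (m : ℕ) : ℝ := ∫ u in Ioi (0:ℝ), u ^ (-(3:ℝ)/2 - m) * Real.exp (-(1:ℝ)^2 / (4*u))

lemma Jm_nonneg (m : ℕ) : 0 ≤ Jm m := by
  apply setIntegral_nonneg measurableSet_Ioi
  intro u hu
  have := Real.rpow_nonneg (le_of_lt (mem_Ioi.1 hu)) (-(3:ℝ)/2 - m)
  positivity

lemma integral_scale (q t : ℝ) (ht : 0 < t) :
    ∫ s in Ioi (0:ℝ), s ^ q * Real.exp (-(t^2) / (4*s))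
      = (t^2) ^ q * t^2 * ∫ u in Ioi (0:ℝ), u ^ q * Real.exp (-(1:ℝ)^2 / (4*u)) := by
  have ht2 : (0:ℝ) < t^2 := by positivity
  have hb : (0:ℝ) < (t^2)⁻¹ := by positivity
  set g : ℝ → ℝ := fun u => u ^ q * Real.exp (-(1:ℝ)^2 / (4*u)) with hg
  have key := integral_comp_mul_left_Ioi g 0 hb
  simp only [mul_zero, inv_inv, smul_eq_mul] at key
  have heq : EqOn (fun s : ℝ => s ^ q * Real.exp (-(t^2) / (4*s)))
      (fun s : ℝ => (t^2) ^ q * g ((t^2)⁻¹ * s)) (Ioi (0:ℝ)) := by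
    intro s hs
    have hs0 : (0:ℝ) < s := mem_Ioi.1 hs
    simp only [hg]
    have h2 : -(1:ℝ)^2 / (4*((t^2)⁻¹ * s)) = -(t^2) / (4*s) := by field_simp
    rw [h2, Real.mul_rpow (by positivity : (0:ℝ) ≤ (t^2)⁻¹) hs0.le]
    have h3 : (t^2) ^ q * ((t^2)⁻¹) ^ q = 1 := by
      rw [← Real.mul_rpow ht2.le (by positivity), mul_inv_cancel₀ ht2.ne', Real.one_rpow]
    linear_combination (-(s ^ q * Real.exp (-(t^2) / (4*s)))) * h3
  calc ∫ s in Ioi (0:ℝ), s ^ q * Real.exp (-(t^2) / (4*s))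
      = ∫ s in Ioi (0:ℝ), (t^2) ^ q * g ((t^2)⁻¹ * s) :=
        setIntegral_congr_fun measurableSet_Ioi heq
    _ = (t^2) ^ q * ∫ s in Ioi (0:ℝ), g ((t^2)⁻¹ * s) := integral_const_mul _ _
    _ = (t^2) ^ q * (t^2 * ∫ u in Ioi (0:ℝ), g u) := by rw [key]
    _ = (t^2) ^ q * t^2 * ∫ u in Ioi (0:ℝ), g u := by ring






lemma integral_trm (a m k : ℕ) {t : ℝ} (ht : 0 < t) (hinv : (a:ℝ) = 2*m + 1 - k) :
    ∫ s in Ioi (0:ℝ), trm a m t s = Jm m * (t^k)⁻¹ := by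
  have h0 : ∫ s in Ioi (0:ℝ), trm a m t s
      = t^a * ∫ s in Ioi (0:ℝ), s ^ (-(3:ℝ)/2 - m) * Real.exp (-(t^2) / (4*s)) := by
    simp only [trm, mul_assoc]
    exact integral_const_mul _ _
  have h1 : ∫ s in Ioi (0:ℝ), trm a m t s
      = t^a * ((t^2) ^ (-(3:ℝ)/2 - m) * t^2 * Jm m) := by
    rw [h0, integral_scale _ t ht]; rfl
  rw [h1]
  have hpow : t^a * ((t^2) ^ (-(3:ℝ)/2 - m) * t^2) = (t^k)⁻¹ := by
    have e1 : (t:ℝ)^a = t ^ (a:ℝ) := (Real.rpow_natCast t a).symm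
    have e2 : (t^2 : ℝ) = t ^ (2:ℝ) := by
      rw [← Real.rpow_natCast t 2]; norm_num
    have e3 : ((t ^ (2:ℝ)) : ℝ) ^ (-(3:ℝ)/2 - m) = t ^ ((2:ℝ) * (-(3:ℝ)/2 - m)) := by
      rw [← Real.rpow_mul ht.le]
    rw [e2, e3, e1, ← Real.rpow_add ht, ← Real.rpow_add ht]
    have e4 : (a:ℝ) + ((2:ℝ) * (-(3:ℝ)/2 - m) + 2) = -(k:ℝ) := by
      rw [hinv]; ring
    rw [e4, Real.rpow_neg ht.le, Real.rpow_natCast]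
  calc t^a * ((t^2) ^ (-(3:ℝ)/2 - m) * t^2 * Jm m)
      = (t^a * ((t^2) ^ (-(3:ℝ)/2 - m) * t^2)) * Jm m := by ring
    _ = Jm m * (t^k)⁻¹ := by rw [hpow]; ring







def absL (L : TL) : TL := L.map fun p => (|p.1| * 3 ^ p.2.1, p.2.1, p.2.2)


def CL (L : TL) : ℝ := (L.map fun p => |p.1| * Jm p.2.2).sum

def Inv (k : ℕ) (L : TL) : Prop := ∀ p ∈ L, p.1 = 0 ∨ (p.2.1 : ℝ) = 2 * p.2.2 + 1 - k


@[simp] lemma absL_nil : absL [] = [] := rfl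
@[simp] lemma absL_cons (p : ℝ × ℕ × ℕ) (L : TL) :
    absL (p :: L) = (|p.1| * 3 ^ p.2.1, p.2.1, p.2.2) :: absL L := rfl
@[simp] lemma CL_nil : CL [] = 0 := rfl
@[simp] lemma CL_cons (p : ℝ × ℕ × ℕ) (L : TL) :
    CL (p :: L) = |p.1| * Jm p.2.2 + CL L := by simp [CL]

lemma CL_nonneg (L : TL) : 0 ≤ CL L := by
  induction L with
  | nil => simp
  | cons p L ih =>
    simp only [CL_cons]
    have := Jm_nonneg p.2.2
    have := abs_nonneg p.1
    nlinarith

lemma inv_Dl {k : ℕ} {L : TL} (h : Inv k L) : Inv (k+1) (Dl L) := by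
  intro p' hp'
  rw [Dl, List.mem_flatMap] at hp'
  obtain ⟨p, hp, hmem⟩ := hp'
  simp only [List.mem_cons, List.mem_singleton, List.not_mem_nil, or_false] at hmem
  rcases h p hp with hc0 | hinv
  · rcases hmem with rfl | rfl
    · left; simp [hc0]
    · left; simp [hc0]
  · rcases hmem with rfl | rfl
    · by_cases ha : p.2.1 = 0
      · left; simp [ha]
      · right
        have h1 : 1 ≤ p.2.1 := Nat.one_le_iff_ne_zero.2 ha
        simp only
        rw [Nat.cast_sub h1]
        push_cast
        push_cast at hinv
        linarith
    · right
      simp only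
      push_cast
      push_cast at hinv
      linarith

lemma measurable_trm (a m : ℕ) (t : ℝ) : Measurable (fun s => trm a m t s) := by
  unfold trm; fun_prop

lemma measurable_ev (L : TL) (t : ℝ) : Measurable (fun s => ev L t s) := by
  induction L with
  | nil => simpa using measurable_const
  | cons p L ih =>
    simp only [ev_cons]
    exact (measurable_const.mul (measurable_trm p.2.1 p.2.2 t)).add ih

lemma integrableOn_ev (L : TL) {t : ℝ} (ht : 0 < t) :
    IntegrableOn (fun s => ev L t s) (Ioi (0:ℝ)) := by
  induction L with
  | nil => simpa using integrableOn_zero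
  | cons p L ih =>
    simp only [ev_cons]
    exact ((integrableOn_trm p.2.1 p.2.2 ht).const_mul p.1).add ih

lemma trm_le (a m : ℕ) {t c s : ℝ} (hc : 0 < c) (h1 : c ≤ t) (h2 : t ≤ 3*c) (hs : 0 < s) :
    trm a m t s ≤ 3 ^ a * trm a m c s := by
  unfold trm
  have ht0 : (0:ℝ) ≤ t := le_trans hc.le h1
  have hsq : (0:ℝ) ≤ s ^ (-(3:ℝ)/2 - m) := Real.rpow_nonneg hs.le _
  have hE : Real.exp (-(t^2) / (4*s)) ≤ Real.exp (-(c^2) / (4*s)) :=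
    Real.exp_le_exp.2 (div_le_div_of_nonneg_right (by nlinarith) (by positivity))
  calc t ^ a * s ^ (-(3:ℝ)/2 - m) * Real.exp (-(t^2) / (4*s))
      ≤ t ^ a * s ^ (-(3:ℝ)/2 - m) * Real.exp (-(c^2) / (4*s)) := by
        apply mul_le_mul_of_nonneg_left hE (by positivity)
    _ ≤ (3*c) ^ a * s ^ (-(3:ℝ)/2 - m) * Real.exp (-(c^2) / (4*s)) := by
        apply mul_le_mul_of_nonneg_right
          (mul_le_mul_of_nonneg_right (pow_le_pow_left₀ ht0 h2 a) hsq) (Real.exp_pos _).le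
    _ = 3 ^ a * (c ^ a * s ^ (-(3:ℝ)/2 - m) * Real.exp (-(c^2) / (4*s))) := by
        rw [mul_pow]; ring

lemma abs_ev_le (L : TL) {c t s : ℝ} (hc : 0 < c) (h1 : c ≤ t) (h2 : t ≤ 3*c) (hs : 0 < s) :
    |ev L t s| ≤ ev (absL L) c s := by
  induction L with
  | nil => simp
  | cons p L ih =>
    simp only [ev_cons, absL_cons]
    calc |p.1 * trm p.2.1 p.2.2 t s + ev L t s|
        ≤ |p.1 * trm p.2.1 p.2.2 t s| + |ev L t s| := abs_add_le _ _
      _ ≤ |p.1| * (3 ^ p.2.1 * trm p.2.1 p.2.2 c s) + ev (absL L) c s := by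
          apply add_le_add _ ih
          rw [abs_mul]
          apply mul_le_mul_of_nonneg_left _ (abs_nonneg _)
          rw [abs_of_nonneg (trm_nonneg (le_trans hc.le h1) hs)]
          exact trm_le _ _ hc h1 h2 hs
      _ = |p.1| * 3 ^ p.2.1 * trm p.2.1 p.2.2 c s + ev (absL L) c s := by ring

lemma ev_absL_nonneg (L : TL) {c s : ℝ} (hc : 0 ≤ c) (hs : 0 < s) : 0 ≤ ev (absL L) c s := by
  induction L with
  | nil => simp
  | cons p L ih =>
    simp only [ev_cons, absL_cons]
    have h1 := trm_nonneg (a := p.2.1) (m := p.2.2) hc hs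
    have h2 : (0:ℝ) ≤ |p.1| * 3 ^ p.2.1 := by positivity
    nlinarith

lemma integrableOn_absL_ev (L : TL) {t : ℝ} (ht : 0 < t) :
    IntegrableOn (fun s => ev (absL L) t s) (Ioi (0:ℝ)) := by
  induction L with
  | nil => simpa using integrableOn_zero
  | cons p L ih =>
    simp only [ev_cons, absL_cons]
    exact ((integrableOn_trm p.2.1 p.2.2 ht).const_mul _).add ih




section Param
variable {F : ℝ → ℝ} {M : ℝ}
  (hF : AEStronglyMeasurable F (volume.restrict (Ioi (0:ℝ))))
  (hM : ∀ s ∈ Ioi (0:ℝ), |F s| ≤ M) (hM0 : 0 ≤ M)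

include hF hM hM0 in
lemma integrable_F_ev (L : TL) {t : ℝ} (ht : 0 < t) :
    Integrable (fun s => F s * ev L t s) (volume.restrict (Ioi (0:ℝ))) := by
  apply Integrable.mono' (((integrableOn_ev L ht).abs).const_mul M)
    (hF.mul (measurable_ev L t).aestronglyMeasurable)
  filter_upwards [ae_restrict_mem measurableSet_Ioi] with s hs
  simp only [Pi.mul_apply, Real.norm_eq_abs, abs_mul]
  exact mul_le_mul_of_nonneg_right (hM s hs) (abs_nonneg _)

include hF hM hM0 in
lemma hasDerivAt_int (L : TL) {t₀ : ℝ} (ht₀ : 0 < t₀) :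
    HasDerivAt (fun t => ∫ s in Ioi (0:ℝ), F s * ev L t s)
      (∫ s in Ioi (0:ℝ), F s * ev (Dl L) t₀ s) t₀ := by
  have hε : (0:ℝ) < t₀/2 := by linarith
  refine (hasDerivAt_integral_of_dominated_loc_of_deriv_le (Metric.ball_mem_nhds t₀ hε)
    (F := fun t s => F s * ev L t s) (F' := fun t s => F s * ev (Dl L) t s)
    (bound := fun s => M * ev (absL (Dl L)) (t₀/2) s)
    ?_ ?_ ?_ ?_ ?_ ?_).2
  · exact Eventually.of_forall fun t =>
      hF.mul (measurable_ev L t).aestronglyMeasurable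
  · exact integrable_F_ev hF hM hM0 L ht₀
  · exact hF.mul (measurable_ev (Dl L) t₀).aestronglyMeasurable
  · filter_upwards [ae_restrict_mem measurableSet_Ioi] with s hs t htb
    have hs0 : (0:ℝ) < s := hs
    rw [Metric.mem_ball, Real.dist_eq, abs_sub_lt_iff] at htb
    have h1 : t₀/2 ≤ t := by linarith [htb.1, htb.2]
    have h2 : t ≤ 3*(t₀/2) := by linarith [htb.1, htb.2]
    rw [Real.norm_eq_abs, abs_mul]
    exact mul_le_mul (hM s hs) (abs_ev_le (Dl L) hε h1 h2 hs0) (abs_nonneg _) hM0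
  · exact (integrableOn_ev (absL (Dl L)) hε).const_mul M
  · filter_upwards [ae_restrict_mem measurableSet_Ioi] with s hs t _
    exact (hasDerivAt_ev L hs t).const_mul (F s)

include hF hM hM0 in
lemma rep (L0 : TL) (k : ℕ) : ∀ t ∈ Ioi (0:ℝ),
    iteratedDeriv k (fun u => ∫ s in Ioi (0:ℝ), F s * ev L0 u s) t
      = ∫ s in Ioi (0:ℝ), F s * ev (Dl^[k] L0) t s := by
  induction k with
  | zero => intro t _; simp
  | succ k ih =>
    intro t ht
    rw [iteratedDeriv_succ]
    have heq : iteratedDeriv k (fun u => ∫ s in Ioi (0:ℝ), F s * ev L0 u s)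
        =ᶠ[nhds t] fun u => ∫ s in Ioi (0:ℝ), F s * ev (Dl^[k] L0) u s := by
      filter_upwards [isOpen_Ioi.mem_nhds ht] with u hu
      exact ih u hu
    rw [heq.deriv_eq, (hasDerivAt_int hF hM hM0 (Dl^[k] L0) ht).deriv,
      Function.iterate_succ_apply']

include hF hM hM0 in
lemma key_trm (a m k : ℕ) (hinv : (a:ℝ) = 2*m+1-k) {t : ℝ} (ht : 0 < t) :
    |∫ s in Ioi (0:ℝ), F s * trm a m t s| ≤ M * (Jm m * (t^k)⁻¹) := by
  have hint : Integrable (fun s => F s * trm a m t s) (volume.restrict (Ioi (0:ℝ))) := by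
    apply (integrable_F_ev hF hM hM0 [((1:ℝ),a,m)] ht).congr
    filter_upwards with s
    simp [ev_cons]
  have hup : ∀ s ∈ Ioi (0:ℝ), ‖F s * trm a m t s‖ ≤ M * trm a m t s := by
    intro s hs
    have hs0 : (0:ℝ) < s := hs
    rw [Real.norm_eq_abs, abs_mul, abs_of_nonneg (trm_nonneg ht.le hs0)]
    exact mul_le_mul_of_nonneg_right (hM s hs) (trm_nonneg ht.le hs0)
  calc |∫ s in Ioi (0:ℝ), F s * trm a m t s|
      ≤ ∫ s in Ioi (0:ℝ), ‖F s * trm a m t s‖ := by rw [← Real.norm_eq_abs]; exact norm_integral_le_integral_norm _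
    _ ≤ ∫ s in Ioi (0:ℝ), M * trm a m t s :=
        setIntegral_mono_on hint.norm ((integrableOn_trm a m ht).const_mul M)
          measurableSet_Ioi hup
    _ = M * (Jm m * (t^k)⁻¹) := by rw [integral_const_mul, integral_trm a m k ht hinv]

include hF hM hM0 in
lemma key (L : TL) (k : ℕ) (hInv : Inv k L) {t : ℝ} (ht : 0 < t) :
    |∫ s in Ioi (0:ℝ), F s * ev L t s| ≤ M * CL L * (t^k)⁻¹ := by
  induction L with
  | nil => simp
  | cons p L ih =>
    have hInvL : Inv k L := fun q hq => hInv q (List.mem_cons_of_mem p hq)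
    have hsplit : ∫ s in Ioi (0:ℝ), F s * ev (p :: L) t s
        = p.1 * (∫ s in Ioi (0:ℝ), F s * trm p.2.1 p.2.2 t s)
          + ∫ s in Ioi (0:ℝ), F s * ev L t s := by
      rw [← integral_const_mul, ← integral_add]
      · apply setIntegral_congr_fun measurableSet_Ioi
        intro s _
        simp only [ev_cons]
        ring
      · apply Integrable.const_mul
        apply (integrable_F_ev hF hM hM0 [((1:ℝ),p.2.1,p.2.2)] ht).congr
        filter_upwards with s
        simp [ev_cons]
      · exact integrable_F_ev hF hM hM0 L ht
    rcases hInv p List.mem_cons_self with hp | hinv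
    · rw [hsplit, hp]
      simp only [zero_mul, zero_add, CL_cons, hp, abs_zero]
      simpa using ih hInvL
    · calc |∫ s in Ioi (0:ℝ), F s * ev (p :: L) t s|
          ≤ |p.1| * |∫ s in Ioi (0:ℝ), F s * trm p.2.1 p.2.2 t s|
            + |∫ s in Ioi (0:ℝ), F s * ev L t s| := by
            rw [hsplit]
            exact (abs_add_le _ _).trans (by rw [abs_mul])
        _ ≤ |p.1| * (M * (Jm p.2.2 * (t^k)⁻¹)) + M * CL L * (t^k)⁻¹ :=
            add_le_add (mul_le_mul_of_nonneg_left
              (key_trm hF hM hM0 p.2.1 p.2.2 k hinv ht) (abs_nonneg _)) (ih hInvL)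
        _ = M * CL (p :: L) * (t^k)⁻¹ := by rw [CL_cons]; ring

end Param
end S3

namespace S3

def L0 : TL := [((2 * Real.sqrt Real.pi)⁻¹, 1, 0)]

lemma inv_iter (k : ℕ) : Inv k (Dl^[k] L0) := by
  induction k with
  | zero =>
    intro p hp
    simp only [Function.iterate_zero, id_eq, L0, List.mem_singleton] at hp
    right
    simp [hp]
  | succ k ih =>
    rw [Function.iterate_succ_apply']
    exact inv_Dl ih

end S3

instance (d : ℕ) : SFinite (gaussMeasure d) := by
  unfold gaussMeasure; infer_instance

lemma aesm_OU (d : ℕ) (f : EuclideanSpace ℝ (Fin d) → ℝ)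
    (hf : Integrable f (gaussMeasure d)) (x : EuclideanSpace ℝ (Fin d)) :
    AEStronglyMeasurable (fun s => OU d s f x) (volume.restrict (Ioi (0:ℝ))) := by
  unfold OU
  apply AEStronglyMeasurable.mul
  · apply Measurable.aestronglyMeasurable
    fun_prop
  · apply AEStronglyMeasurable.integral_prod_right'
      (f := fun p : ℝ × EuclideanSpace ℝ (Fin d) =>
        Real.exp (-(Real.exp (-2 * p.1) * (‖x‖ ^ 2 + ‖p.2‖ ^ 2) -
          2 * Real.exp (-p.1) * (inner ℝ x p.2 : ℝ)) / (1 - Real.exp (-2 * p.1))) * f p.2)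
    apply AEStronglyMeasurable.mul
    · apply Measurable.aestronglyMeasurable
      have hinner : Measurable fun p : ℝ × EuclideanSpace ℝ (Fin d) => (inner ℝ x p.2 : ℝ) :=
        (Continuous.inner
          (continuous_const : Continuous fun _ : ℝ × EuclideanSpace ℝ (Fin d) => x)
          continuous_snd).measurable
      fun_prop
    · exact hf.aestronglyMeasurable.comp_snd

lemma gStable_eq_ev {u s : ℝ} (hs : s ∈ Ioi (0:ℝ)) : gStable u s = S3.ev S3.L0 u s := by
  simp only [S3.L0, S3.ev_cons, S3.ev_nil, S3.trm, gStable]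
  norm_num
  ring

/-- For every `k ≥ 1` there is `C_k > 0` such that for every `f ∈ L¹(γ_d)`,
every `x ∈ ℝ^d` and every `t > 0`, `|∂^k/∂t^k P_t f(x)| ≤ C_k T* f(x) t^{−k}`. -/
theorem stmt_3 (d : ℕ) (k : ℕ) (hk : 1 ≤ k) :
    ∃ C : ℝ, 0 < C ∧ ∀ f : EuclideanSpace ℝ (Fin d) → ℝ, Integrable f (gaussMeasure d) →
      ∀ x : EuclideanSpace ℝ (Fin d), ∀ t : ℝ, 0 < t →
        ENNReal.ofReal |dPH d k f t x| ≤
          ENNReal.ofReal C * OUstar d f x * ENNReal.ofReal (t ^ k)⁻¹ := by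
  classical
  set Lk : S3.TL := S3.Dl^[k] S3.L0 with hLk
  refine ⟨S3.CL Lk + 1, by linarith [S3.CL_nonneg Lk], ?_⟩
  intro f hf x t ht
  set C : ℝ := S3.CL Lk + 1 with hC
  have hCpos : 0 < C := by have := S3.CL_nonneg Lk; rw [hC]; linarith
  have htk : (0:ℝ) < (t^k)⁻¹ := by positivity
  by_cases hS : OUstar d f x = ⊤
  · rw [hS]
    have h1 : ENNReal.ofReal C * ⊤ * ENNReal.ofReal (t ^ k)⁻¹ = ⊤ := by
      rw [ENNReal.mul_top (ENNReal.ofReal_pos.2 hCpos).ne',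
        ENNReal.top_mul (ENNReal.ofReal_pos.2 htk).ne']
    rw [h1]; exact le_top
  · have hM0 : 0 ≤ (OUstar d f x).toReal := ENNReal.toReal_nonneg
    have hMb : ∀ s ∈ Ioi (0:ℝ), |OU d s f x| ≤ (OUstar d f x).toReal := by
      intro s hs
      have h1 : ENNReal.ofReal |OU d s f x| ≤ OUstar d f x :=
        le_iSup₂ (f := fun u (_ : u ∈ Ioi (0:ℝ)) => ENNReal.ofReal |OU d u f x|) s hs
      exact (ENNReal.ofReal_le_iff_le_toReal hS).1 h1
    have hF := aesm_OU d f hf x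
    have hrep : dPH d k f t x = ∫ s in Ioi (0:ℝ), OU d s f x * S3.ev Lk t s := by
      have hfun : (fun u => PH d u f x)
          = fun u => ∫ s in Ioi (0:ℝ), OU d s f x * S3.ev S3.L0 u s := by
        funext u
        unfold PH
        exact setIntegral_congr_fun measurableSet_Ioi fun s hs => by rw [gStable_eq_ev hs]
      unfold dPH
      rw [hfun]
      exact S3.rep hF hMb hM0 S3.L0 k t ht
    have hkey := S3.key hF hMb hM0 Lk k (S3.inv_iter k) ht
    rw [hrep]
    have hMi : (0:ℝ) ≤ (OUstar d f x).toReal * (t^k)⁻¹ := by positivity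
    have hreal : |∫ s in Ioi (0:ℝ), OU d s f x * S3.ev Lk t s|
        ≤ C * ((OUstar d f x).toReal * (t^k)⁻¹) := by
      have hCL := S3.CL_nonneg Lk
      nlinarith [hkey]
    calc ENNReal.ofReal |∫ s in Ioi (0:ℝ), OU d s f x * S3.ev Lk t s|
        ≤ ENNReal.ofReal (C * ((OUstar d f x).toReal * (t^k)⁻¹)) :=
          ENNReal.ofReal_le_ofReal hreal
      _ = ENNReal.ofReal C * (ENNReal.ofReal (OUstar d f x).toReal
            * ENNReal.ofReal (t^k)⁻¹) := by
          rw [ENNReal.ofReal_mul hCpos.le, ENNReal.ofReal_mul hM0]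
      _ = ENNReal.ofReal C * OUstar d f x * ENNReal.ofReal (t^k)⁻¹ := by
          rw [ENNReal.ofReal_toReal hS, mul_assoc]
end
end
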